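/- A function φ : [1,∞) → (0,∞) belongs to the class 𝓜 if and only if there exist a bounded Borel measurable function β : [1,∞) → ℝ having a finite limit at infinity and a continuous function γ : [1,∞) → ℝ converging to 0 at infinity such that φ(t) = exp(β(t) + ∫₁ᵗ γ(τ)/τ dτ) for all t ≥ 1. -/

import Mathlib

open Filter Set

section KaramataAux
open MeasureTheory intervalIntegral

lemma myUCT (h : ℝ → ℝ) (hmeas : Measurable h)
    (hshift : ∀ u : ℝ, Tendsto (fun x => h (x + u) - h x) atTop (nhds 0)) :
    ∀ ε : ℝ, 0 < ε → ∀ᶠ x : ℝ in atTop, ∀ u ∈ Icc (0:ℝ) 2, |h (x + u) - h x| ≤ ε := by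
  intro ε hε
  by_contra hcon
  rw [Filter.not_eventually] at hcon
  have hfreq : ∀ n : ℕ, ∃ x : ℝ, (n : ℝ) ≤ x ∧ ∃ u ∈ Icc (0:ℝ) 2, ε < |h (x + u) - h x| := by
    intro n
    rcases Filter.frequently_atTop.mp hcon n with ⟨x, hx, hx2⟩
    push_neg at hx2
    obtain ⟨u, hu, hu2⟩ := hx2
    exact ⟨x, hx, u, hu, hu2⟩
  choose x hxge u hu hbig using hfreq
  have hxtop : Tendsto x atTop atTop :=
    tendsto_atTop_mono hxge tendsto_natCast_atTop_atTop
  have hxutop : Tendsto (fun n => x n + u n) atTop atTop :=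
    tendsto_atTop_mono (fun n => by linarith [(hu n).1] : ∀ n, x n ≤ x n + u n) hxtop
  set f₁ : ℕ → ℝ → ℝ := fun n v => h (x n + v) - h (x n) with hf₁
  set f₂ : ℕ → ℝ → ℝ := fun n w => h (x n + u n + w) - h (x n + u n) with hf₂
  have hm₁ : ∀ n, StronglyMeasurable (f₁ n) := fun n =>
    ((hmeas.comp (measurable_const.add measurable_id)).sub measurable_const).stronglyMeasurable
  have hm₂ : ∀ n, StronglyMeasurable (f₂ n) := fun n =>
    ((hmeas.comp (measurable_const.add measurable_id)).sub measurable_const).stronglyMeasurable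
  have hlim₁ : ∀ v : ℝ, Tendsto (fun n => f₁ n v) atTop (nhds 0) := by
    intro v; exact (hshift v).comp hxtop
  have hlim₂ : ∀ w : ℝ, Tendsto (fun n => f₂ n w) atTop (nhds 0) := by
    intro w; exact (hshift w).comp hxutop
  obtain ⟨t₁, ht₁s, ht₁m, ht₁μ, hu₁⟩ :=
    MeasureTheory.tendstoUniformlyOn_of_ae_tendsto (μ := volume) (s := Icc (0:ℝ) 4) hm₁
      stronglyMeasurable_const measurableSet_Icc
      (by rw [Real.volume_Icc]; exact ENNReal.ofReal_ne_top)
      (Eventually.of_forall fun v _ => hlim₁ v) (by norm_num : (0:ℝ) < 1/2)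
  obtain ⟨t₂, ht₂s, ht₂m, ht₂μ, hu₂⟩ :=
    MeasureTheory.tendstoUniformlyOn_of_ae_tendsto (μ := volume) (s := Icc (0:ℝ) 2) hm₂
      stronglyMeasurable_const measurableSet_Icc
      (by rw [Real.volume_Icc]; exact ENNReal.ofReal_ne_top)
      (Eventually.of_forall fun v _ => hlim₂ v) (by norm_num : (0:ℝ) < 1/2)
  set A : Set ℝ := Icc (0:ℝ) 4 \ t₁ with hA
  set F : Set ℝ := Icc (0:ℝ) 2 \ t₂ with hF
  rw [Metric.tendstoUniformlyOn_iff] at hu₁ hu₂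
  obtain ⟨n, hn₁, hn₂⟩ := ((hu₁ (ε/2) (by linarith)).and (hu₂ (ε/2) (by linarith))).exists
  set B : Set ℝ := (fun y => y - u n) ⁻¹' F with hB
  have hBmeas : MeasurableSet B :=
    (measurableSet_Icc.diff ht₂m).preimage (measurable_id.sub measurable_const)
  have hBvol : volume B = volume F := by
    have hBeq : B = (fun y => y + (- u n)) ⁻¹' F := by
      ext y; simp [hB, sub_eq_add_neg]
    rw [hBeq]
    exact measure_preimage_add_right volume (-u n) F
  have hFvol : ENNReal.ofReal (3/2) ≤ volume F := by
    calc ENNReal.ofReal (3/2) = ENNReal.ofReal 2 - ENNReal.ofReal (1/2) := by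
          rw [← ENNReal.ofReal_sub] <;> norm_num
      _ ≤ volume (Icc (0:ℝ) 2) - volume t₂ := by
          apply tsub_le_tsub _ ht₂μ
          rw [Real.volume_Icc]; norm_num
      _ ≤ volume F := le_measure_diff
  have hBsub : B ⊆ Icc (0:ℝ) 4 := by
    intro y hy
    have h12 : y - u n ∈ Icc (0:ℝ) 2 := hy.1
    have h3 := (hu n).1; have h4 := (hu n).2
    exact ⟨by linarith [h12.1], by linarith [h12.2]⟩
  have hABnon : (A ∩ B).Nonempty := by
    apply MeasureTheory.nonempty_of_measure_ne_zero (μ := volume)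
    have hsub : B \ A ⊆ t₁ := by
      intro y hy
      have hy4 : y ∈ Icc (0:ℝ) 4 := hBsub hy.1
      by_contra hyt
      exact hy.2 ⟨hy4, hyt⟩
    have h1 : volume B - volume (B \ A) ≤ volume (B \ (B \ A)) := le_measure_diff
    have h2 : B \ (B \ A) = A ∩ B := by
      ext y; simp only [mem_diff, mem_inter_iff, not_and, not_not]
      constructor
      · rintro ⟨hyB, hy2⟩; exact ⟨hy2 hyB, hyB⟩
      · rintro ⟨hyA, hyB⟩; exact ⟨hyB, fun _ => hyA⟩
    have h3 : volume (B \ A) ≤ ENNReal.ofReal (1/2) :=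
      le_trans (measure_mono hsub) ht₁μ
    have h4 : ENNReal.ofReal 1 ≤ volume (A ∩ B) := by
      rw [← h2]
      refine le_trans ?_ h1
      calc ENNReal.ofReal 1 = ENNReal.ofReal (3/2) - ENNReal.ofReal (1/2) := by
            rw [← ENNReal.ofReal_sub] <;> norm_num
        _ ≤ volume B - volume (B \ A) := by
            rw [hBvol]; exact tsub_le_tsub hFvol h3
    intro hzero
    rw [hzero] at h4
    simp at h4
  obtain ⟨v, hvA, hvB⟩ := hABnon
  set w : ℝ := v - u n with hw
  have hwF : w ∈ F := hvB
  have e1 : dist (0:ℝ) (f₁ n v) < ε/2 := hn₁ v hvA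
  have e2 : dist (0:ℝ) (f₂ n w) < ε/2 := hn₂ w hwF
  rw [dist_comm, Real.dist_eq, sub_zero] at e1 e2
  have hkey : h (x n + u n) - h (x n) = f₁ n v - f₂ n w := by
    simp only [hf₁, hf₂]
    have : x n + u n + w = x n + v := by rw [hw]; ring
    rw [this]; ring
  have := hbig n
  rw [hkey] at this
  have habs : |f₁ n v - f₂ n w| ≤ |f₁ n v| + |f₂ n w| := abs_sub _ _
  linarith

lemma tendsto_zero_of_abs_le' {f : ℝ → ℝ} (h : ∀ ε : ℝ, 0 < ε → ∀ᶠ x : ℝ in atTop, |f x| ≤ ε) :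
    Tendsto f atTop (nhds 0) := by
  rw [Metric.tendsto_nhds]
  intro ε hε
  filter_upwards [h (ε/2) (by linarith)] with x hx
  rw [Real.dist_eq, sub_zero]; linarith

lemma myRep (h : ℝ → ℝ) (hmeas : Measurable h)
    (hloc : ∀ b : ℝ, ∃ M : ℝ, ∀ x : ℝ, x ≤ b → |h x| ≤ M)
    (huct : ∀ ε : ℝ, 0 < ε → ∀ᶠ x : ℝ in atTop, ∀ u ∈ Icc (0:ℝ) 2, |h (x + u) - h x| ≤ ε) :
    ∃ β' γ' : ℝ → ℝ, Measurable β' ∧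
      (∃ C : ℝ, ∀ x : ℝ, 0 ≤ x → |β' x| ≤ C) ∧
      (∃ L : ℝ, Tendsto β' atTop (nhds L)) ∧
      Continuous γ' ∧ Tendsto γ' atTop (nhds 0) ∧
      ∀ x : ℝ, h x = β' x + ∫ s in (0:ℝ)..x, γ' s := by
  have hint : ∀ a b : ℝ, IntervalIntegrable h volume a b := by
    intro a b
    obtain ⟨M, hM⟩ := hloc (max a b)
    have hc : IntervalIntegrable (fun _ : ℝ => M) volume a b := intervalIntegrable_const
    rw [intervalIntegrable_iff] at hc ⊢
    refine hc.mono' hmeas.aestronglyMeasurable.restrict ?_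
    filter_upwards [ae_restrict_mem measurableSet_uIoc] with s hs
    exact le_trans (le_of_eq (Real.norm_eq_abs _)) (hM s hs.2)
  set H : ℝ → ℝ := fun x => ∫ s in (0:ℝ)..x, h s with hH
  have hHcont : Continuous H := intervalIntegral.continuous_primitive hint 0
  set g : ℝ → ℝ := fun x => H (x + 1) - H x with hgdef
  have hg : ∀ x : ℝ, g x = ∫ s in x..(x+1), h s := by
    intro x
    have := intervalIntegral.integral_add_adjacent_intervals (hint 0 x) (hint x (x+1))
    simp only [hgdef, hH]
    linarith
  have hgcont : Continuous g := (hHcont.comp (continuous_id.add continuous_const)).sub hHcont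
  have hgint : ∀ a b : ℝ, IntervalIntegrable g volume a b := fun a b =>
    hgcont.intervalIntegrable a b
  set G : ℝ → ℝ := fun x => ∫ s in (0:ℝ)..x, g s with hG
  have hGcont : Continuous G := intervalIntegral.continuous_primitive hgint 0
  set g2 : ℝ → ℝ := fun x => G (x + 1) - G x with hg2def
  have hg2 : ∀ x : ℝ, g2 x = ∫ s in x..(x+1), g s := by
    intro x
    have := intervalIntegral.integral_add_adjacent_intervals (hgint 0 x) (hgint x (x+1))
    simp only [hg2def, hG]
    linarith
  have hg2cont : Continuous g2 := (hGcont.comp (continuous_id.add continuous_const)).sub hGcont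
  set γ' : ℝ → ℝ := fun s => g (s + 1) - g s with hγ'
  set β' : ℝ → ℝ := fun x => h x - g2 x + g2 0 with hβ'
  have hγ'cont : Continuous γ' := (hgcont.comp (continuous_id.add continuous_const)).sub hgcont
  have hβ'meas : Measurable β' := (hmeas.sub hg2cont.measurable).add measurable_const
  -- the identity
  have hid : ∀ x : ℝ, h x = β' x + ∫ s in (0:ℝ)..x, γ' s := by
    intro x
    have e1 : (∫ s in (0:ℝ)..x, γ' s)
        = (∫ s in (0:ℝ)..x, g (s+1)) - ∫ s in (0:ℝ)..x, g s := by
      apply intervalIntegral.integral_sub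
      · exact (hgcont.comp (continuous_id.add continuous_const)).intervalIntegrable 0 x
      · exact hgint 0 x
    have e2 : (∫ s in (0:ℝ)..x, g (s+1)) = ∫ s in (1:ℝ)..(x+1), g s := by
      simpa using intervalIntegral.integral_comp_add_right (a := (0:ℝ)) (b := x) g 1
    have e3 : G 1 + (∫ s in (1:ℝ)..(x+1), g s) = G (x+1) :=
      intervalIntegral.integral_add_adjacent_intervals (hgint 0 1) (hgint 1 (x+1))
    have e4 : G 0 = 0 := intervalIntegral.integral_same
    have d0 : g2 x = G (x+1) - G x := rfl
    have d0' : G x = ∫ s in (0:ℝ)..x, g s := rfl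
    have d1 : g2 0 = G 1 - G 0 := by
      show G (0+1) - G 0 = G 1 - G 0; norm_num
    have key : (∫ s in (0:ℝ)..x, γ' s) = g2 x - g2 0 := by
      rw [e1, e2, d0, d1, d0']
      linarith
    show h x = h x - g2 x + g2 0 + _
    rw [key]; ring
  -- γ' tends to 0
  have hγ'0 : Tendsto γ' atTop (nhds 0) := by
    apply tendsto_zero_of_abs_le'
    intro ε hε
    obtain ⟨X, hX⟩ := eventually_atTop.mp (huct ε hε)
    rw [eventually_atTop]
    refine ⟨X, fun s hs => ?_⟩
    have hI : IntervalIntegrable (fun u => h (u+1)) volume s (s+1) := by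
      have := (hint (s+1) (s+1+1)).comp_add_right 1
      simpa using this
    have e1 : γ' s = ∫ u in s..(s+1), (h (u+1) - h u) := by
      rw [intervalIntegral.integral_sub hI (hint s (s+1))]
      have e2 : (∫ u in s..(s+1), h (u+1)) = ∫ u in (s+1)..(s+1+1), h u :=
        intervalIntegral.integral_comp_add_right (a := s) (b := s+1) h 1
      have d1 : γ' s = g (s+1) - g s := rfl
      rw [d1, e2, hg s, hg (s+1)]
    calc |γ' s| ≤ ε * |s + 1 - s| := by
          rw [e1, ← Real.norm_eq_abs]
          refine intervalIntegral.norm_integral_le_of_norm_le_const ?_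
          intro u hu
          rw [Set.uIoc_of_le (by linarith : s ≤ s + 1)] at hu
          have hus : X ≤ u := le_trans hs (le_of_lt hu.1)
          have := hX u hus 1 ⟨by norm_num, by norm_num⟩
          simpa using this
      _ = ε := by simp
  -- h - g2 tends to 0
  have hβ'lim0 : Tendsto (fun x => h x - g2 x) atTop (nhds 0) := by
    apply tendsto_zero_of_abs_le'
    intro ε hε
    obtain ⟨X, hX⟩ := eventually_atTop.mp (huct ε hε)
    rw [eventually_atTop]
    refine ⟨X, fun x hx => ?_⟩
    have key1 : ∀ s ∈ Set.uIoc x (x+1), |h x - g s| ≤ ε := by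
      intro s hs
      rw [Set.uIoc_of_le (by linarith : x ≤ x + 1)] at hs
      have e : h x - g s = ∫ u in s..(s+1), (h x - h u) := by
        rw [intervalIntegral.integral_sub (intervalIntegrable_const) (hint s (s+1))]
        simp [hg s, intervalIntegral.integral_const]
      rw [e]
      have hb : |(∫ u in s..(s+1), (h x - h u))| ≤ ε * |s + 1 - s| := by
        rw [← Real.norm_eq_abs]
        refine intervalIntegral.norm_integral_le_of_norm_le_const ?_
        intro u hu
        rw [Set.uIoc_of_le (by linarith : s ≤ s + 1)] at hu
        have h1 : x ≤ u := le_trans (le_of_lt hs.1) (le_of_lt hu.1)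
        have h2 : u ≤ x + 2 := by linarith [hu.2, hs.2]
        have := hX x hx (u - x) ⟨by linarith, by linarith⟩
        rw [add_sub_cancel] at this
        rw [Real.norm_eq_abs, abs_sub_comm]
        exact this
      simpa using hb
    have e : h x - g2 x = ∫ s in x..(x+1), (h x - g s) := by
      rw [intervalIntegral.integral_sub (intervalIntegrable_const) (hgint x (x+1))]
      simp [hg2 x, intervalIntegral.integral_const]
    rw [e]
    have hb : |(∫ s in x..(x+1), (h x - g s))| ≤ ε * |x + 1 - x| := by
      rw [← Real.norm_eq_abs]
      refine intervalIntegral.norm_integral_le_of_norm_le_const ?_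
      intro s hs
      rw [Real.norm_eq_abs]
      exact key1 s hs
    simpa using hb
  have hβ'lim : Tendsto β' atTop (nhds (g2 0)) := by
    have := hβ'lim0.add_const (g2 0)
    simpa [hβ'] using this
  -- boundedness of β' on [0, ∞)
  have hβ'bdd : ∃ C : ℝ, ∀ x : ℝ, 0 ≤ x → |β' x| ≤ C := by
    have hev : ∀ᶠ x : ℝ in atTop, dist (β' x) (g2 0) < 1 :=
      Metric.tendsto_nhds.mp hβ'lim 1 one_pos
    obtain ⟨X, hX⟩ := eventually_atTop.mp hev
    obtain ⟨M, hM⟩ := hloc (max X 0)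
    obtain ⟨C₂, hC₂⟩ := (isCompact_Icc (a := (0:ℝ)) (b := max X 0)).exists_bound_of_continuousOn
      hg2cont.continuousOn
    refine ⟨max (M + C₂ + |g2 0|) (|g2 0| + 1), fun x hx0 => ?_⟩
    by_cases hcase : x ≤ max X 0
    · have h1 : |h x| ≤ M := hM x hcase
      have h2 : |g2 x| ≤ C₂ := by
        have := hC₂ x ⟨hx0, hcase⟩
        rwa [Real.norm_eq_abs] at this
      refine le_trans ?_ (le_max_left _ _)
      calc |β' x| ≤ |h x| + |g2 x| + |g2 0| := by
            simp only [hβ']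
            exact le_trans (abs_add_le _ _) (by gcongr; exact abs_sub _ _)
        _ ≤ M + C₂ + |g2 0| := by gcongr
    · push_neg at hcase
      have hxX : X ≤ x := le_trans (le_max_left _ _) hcase.le
      have := hX x hxX
      rw [Real.dist_eq] at this
      refine le_trans ?_ (le_max_right _ _)
      have hd := hX x hxX
      rw [Real.dist_eq] at hd
      have habs := abs_sub_abs_le_abs_sub (β' x) (g2 0)
      linarith
  exact ⟨β', γ', hβ'meas, hβ'bdd, ⟨g2 0, hβ'lim⟩, hγ'cont, hγ'0, hid⟩

end KaramataAux

/-- The class `𝓜`. -/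
def MemM (φ : ℝ → ℝ) : Prop :=
  Measurable ((Set.Ici (1:ℝ)).indicator φ) ∧
  (∀ t, 1 ≤ t → 0 < φ t) ∧
  (∀ b : ℝ, 1 < b → ∃ C : ℝ, 0 < C ∧ ∀ t ∈ Set.Icc (1:ℝ) b, φ t ≤ C ∧ 1 / φ t ≤ C) ∧
  (∀ l : ℝ, 0 < l → Tendsto (fun t => φ (l * t) / φ t) atTop (nhds 1))

theorem memM_iff_karamata_representation (φ : ℝ → ℝ) :
    MemM φ ↔
      ∃ β γ : ℝ → ℝ,
        Measurable ((Set.Ici (1:ℝ)).indicator β) ∧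
        (∃ Cβ : ℝ, ∀ t, 1 ≤ t → |β t| ≤ Cβ) ∧
        (∃ L : ℝ, Tendsto β atTop (nhds L)) ∧
        ContinuousOn γ (Set.Ici (1:ℝ)) ∧
        Tendsto γ atTop (nhds 0) ∧
        ∀ t, 1 ≤ t → φ t = Real.exp (β t + ∫ τ in (1:ℝ)..t, γ τ / τ) := by
  constructor
  · rintro ⟨hmeasφ, hpos, hlocφ, hlim⟩
    set h : ℝ → ℝ := fun x => Real.log ((Set.Ici (1:ℝ)).indicator φ (Real.exp x)) with hhdef
    have hhmeas : Measurable h := Real.measurable_log.comp (hmeasφ.comp Real.measurable_exp)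
    have hhval : ∀ x : ℝ, 0 ≤ x → h x = Real.log (φ (Real.exp x)) := by
      intro x hx
      have hmem : Real.exp x ∈ Ici (1:ℝ) := Real.one_le_exp hx
      simp only [hhdef, Set.indicator_of_mem hmem]
    have hhval0 : ∀ x : ℝ, x < 0 → h x = 0 := by
      intro x hx
      have hmem : Real.exp x ∉ Ici (1:ℝ) := by
        simp only [mem_Ici, not_le]
        exact Real.exp_lt_one_iff.mpr hx
      simp [hhdef, Set.indicator_of_notMem hmem]
    have hloc : ∀ b : ℝ, ∃ M : ℝ, ∀ x : ℝ, x ≤ b → |h x| ≤ M := by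
      intro b
      have hb1 : (1:ℝ) < Real.exp (max b 0) + 1 := by
        have := Real.exp_pos (max b 0); linarith
      obtain ⟨C, hCpos, hC⟩ := hlocφ _ hb1
      refine ⟨|Real.log C|, fun x hx => ?_⟩
      rcases lt_or_ge x 0 with hneg | hnn
      · rw [hhval0 x hneg]; simp
      · have hx1 : (1:ℝ) ≤ Real.exp x := Real.one_le_exp hnn
        have hx2 : Real.exp x ≤ Real.exp (max b 0) + 1 := by
          have : Real.exp x ≤ Real.exp (max b 0) :=
            Real.exp_le_exp.mpr (le_trans hx (le_max_left _ _))
          linarith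
        obtain ⟨hφC, hφinvC⟩ := hC (Real.exp x) ⟨hx1, hx2⟩
        have hφpos := hpos _ hx1
        rw [hhval x hnn]
        rw [abs_le]
        constructor
        · have h1 : Real.log (1 / φ (Real.exp x)) ≤ Real.log C :=
            Real.log_le_log (by positivity) hφinvC
          rw [Real.log_div one_ne_zero (ne_of_gt hφpos), Real.log_one] at h1
          linarith [le_abs_self (Real.log C)]
        · have h2 : Real.log (φ (Real.exp x)) ≤ Real.log C := Real.log_le_log hφpos hφC
          linarith [le_abs_self (Real.log C)]
    have hshift : ∀ u : ℝ, Tendsto (fun x => h (x + u) - h x) atTop (nhds 0) := by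
      intro u
      have h1 : Tendsto (fun t => φ (Real.exp u * t) / φ t) atTop (nhds 1) :=
        hlim _ (Real.exp_pos u)
      have h2 : Tendsto (fun t => Real.log (φ (Real.exp u * t) / φ t)) atTop (nhds 0) := by
        have := (Real.continuousAt_log one_ne_zero).tendsto.comp h1
        simpa [Function.comp_def] using this
      have h3 := h2.comp Real.tendsto_exp_atTop
      apply h3.congr'
      filter_upwards [eventually_ge_atTop (max 0 (-u))] with x hx
      have hx0 : 0 ≤ x := le_trans (le_max_left _ _) hx
      have hxu : 0 ≤ x + u := by
        have := le_trans (le_max_right _ _) hx; linarith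
      have e1 : Real.exp u * Real.exp x = Real.exp (x + u) := by
        rw [← Real.exp_add]; ring_nf
      have hp1 : 0 < φ (Real.exp (x + u)) := hpos _ (Real.one_le_exp hxu)
      have hp2 : 0 < φ (Real.exp x) := hpos _ (Real.one_le_exp hx0)
      show Real.log (φ (Real.exp u * Real.exp x) / φ (Real.exp x)) = h (x + u) - h x
      rw [e1, Real.log_div (ne_of_gt hp1) (ne_of_gt hp2), hhval _ hxu, hhval _ hx0]
    obtain ⟨β', γ', hβ'meas, ⟨C, hC⟩, ⟨L, hL⟩, hγ'cont, hγ'0, hid⟩ :=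
      myRep h hhmeas hloc (myUCT h hhmeas hshift)
    refine ⟨fun t => β' (Real.log t), fun t => γ' (Real.log t),
      (hβ'meas.comp Real.measurable_log).indicator measurableSet_Ici,
      ⟨C, fun t ht => hC _ (Real.log_nonneg ht)⟩,
      ⟨L, hL.comp Real.tendsto_log_atTop⟩, ?_,
      hγ'0.comp Real.tendsto_log_atTop, ?_⟩
    · refine hγ'cont.comp_continuousOn (Real.continuousOn_log.mono ?_)
      intro x hx
      simp only [mem_compl_iff, mem_singleton_iff]
      have : (1:ℝ) ≤ x := hx
      intro h0; rw [h0] at this; linarith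
    · intro t ht
      have ht0 : 0 < t := lt_of_lt_of_le one_pos ht
      have hlog : h (Real.log t) = Real.log (φ t) := by
        rw [hhval _ (Real.log_nonneg ht), Real.exp_log ht0]
      have hsub : (∫ τ in (1:ℝ)..t, γ' (Real.log τ) / τ)
          = ∫ s in (0:ℝ)..(Real.log t), γ' s := by
        have hderiv : ∀ τ ∈ uIcc (1:ℝ) t, HasDerivAt Real.log τ⁻¹ τ := by
          intro τ hτ
          rw [uIcc_of_le ht] at hτ
          exact Real.hasDerivAt_log (ne_of_gt (lt_of_lt_of_le one_pos hτ.1))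
        have hcont' : ContinuousOn (fun τ : ℝ => τ⁻¹) (uIcc (1:ℝ) t) := by
          apply ContinuousOn.inv₀ continuousOn_id
          intro τ hτ
          rw [uIcc_of_le ht] at hτ
          exact ne_of_gt (lt_of_lt_of_le one_pos hτ.1)
        have key := intervalIntegral.integral_comp_smul_deriv hderiv hcont' hγ'cont
        rw [Real.log_one] at key
        rw [← key]
        apply intervalIntegral.integral_congr
        intro τ hτ
        rw [uIcc_of_le ht] at hτ
        have hτ0 : (0:ℝ) < τ := lt_of_lt_of_le one_pos hτ.1
        simp only [Function.comp, smul_eq_mul]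
        rw [div_eq_inv_mul]
      rw [hsub]
      have := hid (Real.log t)
      rw [hlog] at this
      rw [← this, Real.exp_log (hpos t ht)]
  · rintro ⟨β, γ, hβmeas, ⟨Cβ, hCβ⟩, ⟨L, hL⟩, hγcont, hγ0, hrep⟩
    set γh : ℝ → ℝ := fun τ => γ (max 1 τ) / max 1 τ with hγh
    have hmaxpos : ∀ τ : ℝ, (0:ℝ) < max 1 τ := fun τ => lt_of_lt_of_le one_pos (le_max_left _ _)
    have hγhcont : Continuous γh := by
      apply Continuous.div
      · exact hγcont.comp_continuous (continuous_const.max continuous_id)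
          (fun τ => le_max_left 1 τ)
      · exact continuous_const.max continuous_id
      · exact fun τ => ne_of_gt (hmaxpos τ)
    have hγhint : ∀ a b : ℝ, IntervalIntegrable γh MeasureTheory.volume a b := fun a b =>
      hγhcont.intervalIntegrable a b
    set F : ℝ → ℝ := fun t => ∫ τ in (1:ℝ)..t, γh τ with hF
    have hFcont : Continuous F := intervalIntegral.continuous_primitive hγhint 1
    have hFeq : ∀ t : ℝ, 1 ≤ t → F t = ∫ τ in (1:ℝ)..t, γ τ / τ := by
      intro t ht
      apply intervalIntegral.integral_congr
      intro τ hτ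
      rw [uIcc_of_le ht] at hτ
      have h1 : max 1 τ = τ := max_eq_right hτ.1
      simp only [hγh, h1]
    have hφeq : ∀ t : ℝ, 1 ≤ t → φ t = Real.exp (β t + F t) := fun t ht => by
      rw [hrep t ht, hFeq t ht]
    refine ⟨?_, ?_, ?_, ?_⟩
    · have heq : (Set.Ici (1:ℝ)).indicator φ
          = (Set.Ici (1:ℝ)).indicator (fun t => Real.exp ((Set.Ici (1:ℝ)).indicator β t + F t)) := by
        ext t
        by_cases ht : t ∈ Set.Ici (1:ℝ)
        · rw [Set.indicator_of_mem ht, Set.indicator_of_mem ht, Set.indicator_of_mem ht,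
            hφeq t ht]
        · rw [Set.indicator_of_notMem ht, Set.indicator_of_notMem ht]
      rw [heq]
      exact (Real.measurable_exp.comp (hβmeas.add hFcont.measurable)).indicator
        measurableSet_Ici
    · intro t ht; rw [hφeq t ht]; exact Real.exp_pos _
    · intro b _
      obtain ⟨Mf, hMf⟩ := (isCompact_Icc (a := (1:ℝ)) (b := b)).exists_bound_of_continuousOn
        hFcont.continuousOn
      refine ⟨Real.exp (Cβ + Mf), Real.exp_pos _, fun t ht => ?_⟩
      have h1 : |β t| ≤ Cβ := hCβ t ht.1
      have h2 : |F t| ≤ Mf := by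
        have := hMf t ht; rwa [Real.norm_eq_abs] at this
      have key : |β t + F t| ≤ Cβ + Mf :=
        le_trans (abs_add_le _ _) (add_le_add h1 h2)
      constructor
      · rw [hφeq t ht.1]
        exact Real.exp_le_exp.mpr (le_trans (le_abs_self _) key)
      · rw [hφeq t ht.1, one_div, ← Real.exp_neg]
        exact Real.exp_le_exp.mpr (le_trans (neg_le_abs _) key)
    · intro l hl
      have hβd : Tendsto (fun t => β (l * t) - β t) atTop (nhds 0) := by
        have hmul : Tendsto (fun t : ℝ => l * t) atTop atTop :=
          Tendsto.const_mul_atTop hl tendsto_id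
        have h1 : Tendsto (fun t => β (l * t)) atTop (nhds L) := hL.comp hmul
        simpa using h1.sub hL
      have hFd : Tendsto (fun t => F (l * t) - F t) atTop (nhds 0) := by
        apply tendsto_zero_of_abs_le'
        intro ε hε
        have hm : (0:ℝ) < min 1 l := lt_min one_pos hl
        set δ : ℝ := ε * min 1 l / (|l - 1| + 1) with hδ
        have hδpos : 0 < δ := by
          apply div_pos (mul_pos hε hm)
          positivity
        have hγev : ∀ᶠ τ : ℝ in atTop, |γ τ| ≤ δ := by
          have := Metric.tendsto_nhds.mp hγ0 δ hδpos
          filter_upwards [this] with τ hτ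
          rw [Real.dist_eq, sub_zero] at hτ
          exact le_of_lt hτ
        obtain ⟨T₀, hT₀⟩ := eventually_atTop.mp hγev
        set T : ℝ := max T₀ 1 with hTdef
        have hT : ∀ τ : ℝ, T ≤ τ → |γ τ| ≤ δ := fun τ hτ =>
          hT₀ τ (le_trans (le_max_left _ _) hτ)
        rw [eventually_atTop]
        refine ⟨max T (T / l), fun t ht => ?_⟩
        have htT : T ≤ t := le_trans (le_max_left _ _) ht
        have ht1 : (1:ℝ) ≤ t := le_trans (le_max_right _ _) htT
        have ht0 : (0:ℝ) < t := lt_of_lt_of_le one_pos ht1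
        have htlT : T ≤ l * t := by
          have h1 : T / l ≤ t := le_trans (le_max_right _ _) ht
          calc T = l * (T / l) := by field_simp
            _ ≤ l * t := by apply mul_le_mul_of_nonneg_left h1 (le_of_lt hl)
        have hminT : T ≤ min t (l * t) := le_min htT htlT
        have hmin0 : (0:ℝ) < min t (l * t) := lt_of_lt_of_le
          (lt_of_lt_of_le one_pos (le_max_right T₀ 1)) hminT
        have hd : F (l * t) - F t = ∫ τ in t..(l * t), γh τ := by
          have := intervalIntegral.integral_add_adjacent_intervals
            (hγhint 1 t) (hγhint t (l * t))
          show (∫ τ in (1:ℝ)..(l * t), γh τ) - (∫ τ in (1:ℝ)..t, γh τ) = _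
          linarith
        rw [hd]
        have bound : |∫ τ in t..(l * t), γh τ| ≤ (δ / min t (l * t)) * |l * t - t| := by
          rw [← Real.norm_eq_abs]
          refine intervalIntegral.norm_integral_le_of_norm_le_const ?_
          intro τ hτ
          have hτmin : min t (l * t) < τ := by
            rcases Set.mem_uIoc.mp hτ with h' | h'
            · exact lt_of_le_of_lt (min_le_left _ _) h'.1
            · exact lt_of_le_of_lt (min_le_right _ _) h'.1
          have hτT : T ≤ τ := le_trans hminT (le_of_lt hτmin)
          have hτ1 : (1:ℝ) ≤ τ := le_trans (le_max_right T₀ 1) hτT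
          have hτ0 : (0:ℝ) < τ := lt_of_lt_of_le one_pos hτ1
          have hγτ : |γ τ| ≤ δ := hT τ hτT
          have e : γh τ = γ τ / τ := by
            simp only [hγh, max_eq_right hτ1]
          rw [Real.norm_eq_abs, e, abs_div, abs_of_pos hτ0]
          calc |γ τ| / τ ≤ δ / τ := by gcongr
            _ ≤ δ / min t (l * t) := by gcongr <;> first | exact hδpos.le | exact hmin0 | exact hτmin.le
        have harith : (δ / min t (l * t)) * |l * t - t| ≤ ε := by
          have habs : |l * t - t| = t * |l - 1| := by
            rw [show l * t - t = t * (l - 1) by ring, abs_mul, abs_of_pos ht0]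
          have hminEq : min t (l * t) = t * min 1 l := by
            rcases le_total l 1 with hle | hge
            · rw [min_eq_right (by nlinarith : l * t ≤ t), min_eq_right hle]; ring
            · rw [min_eq_left (by nlinarith : t ≤ l * t), min_eq_left hge]; ring
          rw [habs, hminEq, hδ]
          rw [div_mul_eq_mul_div, div_le_iff₀ (by positivity)]
          have h1 : |l - 1| ≤ |l - 1| + 1 := by linarith
          calc ε * min 1 l / (|l - 1| + 1) * (t * |l - 1|)
              = ε * (t * min 1 l) * (|l - 1| / (|l - 1| + 1)) := by
                field_simp
            _ ≤ ε * (t * min 1 l) * 1 := by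
                apply mul_le_mul_of_nonneg_left _ (by positivity)
                rw [div_le_one (by positivity)]; exact h1
            _ = ε * (t * min 1 l) := by ring
        exact le_trans bound harith
      have hsum : Tendsto (fun t => (β (l * t) + F (l * t)) - (β t + F t)) atTop (nhds 0) := by
        have := hβd.add hFd
        simp only [add_zero] at this
        apply this.congr
        intro t; ring
      have hexp : Tendsto (fun t => Real.exp ((β (l * t) + F (l * t)) - (β t + F t)))
          atTop (nhds 1) := by
        have := (Real.continuous_exp.tendsto 0).comp hsum
        simpa [Function.comp_def] using this
      apply hexp.congr'
      filter_upwards [eventually_ge_atTop (max 1 (1 / l))] with t ht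
      have ht1 : (1:ℝ) ≤ t := le_trans (le_max_left _ _) ht
      have hlt1 : (1:ℝ) ≤ l * t := by
        have h1 : 1 / l ≤ t := le_trans (le_max_right _ _) ht
        calc (1:ℝ) = l * (1 / l) := by field_simp
          _ ≤ l * t := mul_le_mul_of_nonneg_left h1 (le_of_lt hl)
      rw [hφeq _ hlt1, hφeq t ht1, ← Real.exp_sub]
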